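/- For any algorithm in the nested-box model (decisions to open box ℓ of basket i are measurable in information available before observing signal s_i^(ℓ)), the expected welfare contribution of basket i, E[A_i v_i - Σ_{ℓ=1}^d I_i^(ℓ) c_i^(ℓ)], equals E[A_i v_i - Σ_{ℓ=1}^d I_i^(ℓ) (κ_i^(ℓ+1) - κ_i^(ℓ))]. -/

import Mathlib

open MeasureTheory Filter

/-- Cost amortization for a nested Pandora basket: `𝒢 ℓ` is the σ-algebra of
information available before opening box `ℓ` (generated by signals `s^(1),…,s^(ℓ-1)`),
the nested Weitzman index `σidx ℓ` satisfies
`E[(κ (ℓ+1) - σidx ℓ)⁺ | 𝒢 ℓ] = c ℓ`, the inspection indicator `I ℓ` is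
`𝒢 ℓ`-measurable (decided before observing signal `s^(ℓ)`), and the capped values
satisfy `κ (d+1) = v`, `κ ℓ = min (σidx ℓ) (κ (ℓ+1))`. Then the expected welfare
contribution `E[A·v - ∑ I ℓ · c ℓ]` equals
`E[A·v - ∑ I ℓ · (κ (ℓ+1) - κ ℓ)]`. -/
theorem nested_cost_amortization
    {Ω : Type*} [m0 : MeasurableSpace Ω] (μ : Measure Ω) [IsProbabilityMeasure μ]
    (d : ℕ) (𝒢 : ℕ → MeasurableSpace Ω) (h𝒢 : ∀ ℓ, 𝒢 ℓ ≤ m0)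
    (σidx κ : ℕ → Ω → ℝ) (v A : Ω → ℝ) (I : ℕ → Ω → ℝ) (c : ℕ → ℝ)
    (hκtop : κ (d + 1) = v)
    (hκ : ∀ ℓ, 1 ≤ ℓ → ℓ ≤ d → κ ℓ = fun ω => min (σidx ℓ ω) (κ (ℓ + 1) ω))
    (hσmeas : ∀ ℓ, Measurable (σidx ℓ)) (hκmeas : ∀ ℓ, Measurable (κ ℓ))
    (hσ : ∀ ℓ, 1 ≤ ℓ → ℓ ≤ d →
      (μ[(fun ω => max (κ (ℓ + 1) ω - σidx ℓ ω) 0) | 𝒢 ℓ]) =ᵐ[μ] fun _ => c ℓ)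
    (hImeas : ∀ ℓ, 1 ≤ ℓ → ℓ ≤ d → Measurable[𝒢 ℓ] (I ℓ))
    (hI01 : ∀ ℓ ω, I ℓ ω = 0 ∨ I ℓ ω = 1)
    (hAmeas : Measurable A) (hA01 : ∀ ω, A ω = 0 ∨ A ω = 1)
    (hvint : Integrable v μ)
    (hκint : ∀ ℓ, 1 ≤ ℓ → ℓ ≤ d + 1 → Integrable (κ ℓ) μ) :
    ∫ ω, (A ω * v ω - ∑ ℓ ∈ Finset.Icc 1 d, I ℓ ω * c ℓ) ∂μ =
      ∫ ω, (A ω * v ω - ∑ ℓ ∈ Finset.Icc 1 d, I ℓ ω * (κ (ℓ + 1) ω - κ ℓ ω)) ∂μ := by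
  have hIb : ∀ ℓ ω, |I ℓ ω| ≤ 1 := by
    intro ℓ ω; rcases hI01 ℓ ω with h | h <;> simp [h]
  have hIm0 : ∀ ℓ, 1 ≤ ℓ → ℓ ≤ d → Measurable (I ℓ) := fun ℓ h1 h2 =>
    (hImeas ℓ h1 h2).mono (h𝒢 ℓ) le_rfl
  have hXeq : ∀ ℓ, 1 ≤ ℓ → ℓ ≤ d → ∀ ω,
      κ (ℓ + 1) ω - κ ℓ ω = max (κ (ℓ + 1) ω - σidx ℓ ω) 0 := by
    intro ℓ h1 h2 ω
    simp only [hκ ℓ h1 h2]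
    rcases le_total (σidx ℓ ω) (κ (ℓ + 1) ω) with h | h
    · rw [min_eq_left h, max_eq_left (by linarith)]
    · rw [min_eq_right h, max_eq_right (by linarith)]; ring
  have hXint : ∀ ℓ, 1 ≤ ℓ → ℓ ≤ d →
      Integrable (fun ω => max (κ (ℓ + 1) ω - σidx ℓ ω) 0) μ := by
    intro ℓ h1 h2
    have h : Integrable (fun ω => κ (ℓ + 1) ω - κ ℓ ω) μ :=
      (hκint (ℓ + 1) (by omega) (by omega)).sub (hκint ℓ (by omega) (by omega))
    exact h.congr (Filter.Eventually.of_forall fun ω => (hXeq ℓ h1 h2 ω))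
  have hIXint : ∀ ℓ, 1 ≤ ℓ → ℓ ≤ d →
      Integrable (fun ω => I ℓ ω * max (κ (ℓ + 1) ω - σidx ℓ ω) 0) μ := fun ℓ h1 h2 =>
    (hXint ℓ h1 h2).bdd_mul ((hIm0 ℓ h1 h2).aestronglyMeasurable) (c := 1) (Filter.Eventually.of_forall (hIb ℓ))
  have hIκint : ∀ ℓ, 1 ≤ ℓ → ℓ ≤ d →
      Integrable (fun ω => I ℓ ω * (κ (ℓ + 1) ω - κ ℓ ω)) μ := by
    intro ℓ h1 h2
    exact (hIXint ℓ h1 h2).congr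
      (Filter.Eventually.of_forall fun ω => by simp only [hXeq ℓ h1 h2 ω])
  have hIcint : ∀ ℓ, 1 ≤ ℓ → ℓ ≤ d → Integrable (fun ω => I ℓ ω * c ℓ) μ := by
    intro ℓ h1 h2
    refine (integrable_const |c ℓ|).mono'
      ((hIm0 ℓ h1 h2).mul_const _).aestronglyMeasurable
      (Filter.Eventually.of_forall fun ω => by
        calc ‖I ℓ ω * c ℓ‖ = |I ℓ ω| * |c ℓ| := abs_mul _ _
          _ ≤ 1 * |c ℓ| := mul_le_mul_of_nonneg_right (hIb ℓ ω) (abs_nonneg _)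
          _ = |c ℓ| := one_mul _)
  have key : ∀ ℓ ∈ Finset.Icc 1 d,
      ∫ ω, I ℓ ω * c ℓ ∂μ = ∫ ω, I ℓ ω * (κ (ℓ + 1) ω - κ ℓ ω) ∂μ := by
    intro ℓ hℓ
    rw [Finset.mem_Icc] at hℓ
    obtain ⟨h1, h2⟩ := hℓ
    set X : Ω → ℝ := fun ω => max (κ (ℓ + 1) ω - σidx ℓ ω) 0 with hXdef
    have hcond : μ[fun ω => I ℓ ω * X ω | 𝒢 ℓ]
        =ᵐ[μ] fun ω => I ℓ ω * (μ[X | 𝒢 ℓ]) ω := by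
      have := condExp_mul_of_stronglyMeasurable_left (m := 𝒢 ℓ) (μ := μ)
        ((hImeas ℓ h1 h2).stronglyMeasurable) (hIXint ℓ h1 h2) (hXint ℓ h1 h2)
      exact this
    have step1 : ∫ ω, I ℓ ω * X ω ∂μ = ∫ ω, I ℓ ω * (μ[X | 𝒢 ℓ]) ω ∂μ := by
      rw [← integral_condExp (h𝒢 ℓ)]
      exact integral_congr_ae hcond
    have step2 : (fun ω => I ℓ ω * (μ[X | 𝒢 ℓ]) ω) =ᵐ[μ] fun ω => I ℓ ω * c ℓ := by
      filter_upwards [hσ ℓ h1 h2] with ω hω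
      rw [hω]
    calc ∫ ω, I ℓ ω * c ℓ ∂μ = ∫ ω, I ℓ ω * (μ[X | 𝒢 ℓ]) ω ∂μ :=
          (integral_congr_ae step2).symm
      _ = ∫ ω, I ℓ ω * X ω ∂μ := step1.symm
      _ = ∫ ω, I ℓ ω * (κ (ℓ + 1) ω - κ ℓ ω) ∂μ :=
          integral_congr_ae (Filter.Eventually.of_forall fun ω => by
            simp only [hXdef, hXeq ℓ h1 h2 ω])
  have hAvint : Integrable (fun ω => A ω * v ω) μ := by
    refine hvint.bdd_mul hAmeas.aestronglyMeasurable (c := 1) (Filter.Eventually.of_forall fun ω => ?_)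
    rcases hA01 ω with h | h <;> simp [h]
  have hsum1 : Integrable (fun ω => ∑ ℓ ∈ Finset.Icc 1 d, I ℓ ω * c ℓ) μ :=
    integrable_finset_sum _ fun ℓ hℓ => by
      rw [Finset.mem_Icc] at hℓ; exact hIcint ℓ hℓ.1 hℓ.2
  have hsum2 : Integrable (fun ω => ∑ ℓ ∈ Finset.Icc 1 d, I ℓ ω * (κ (ℓ + 1) ω - κ ℓ ω)) μ :=
    integrable_finset_sum _ fun ℓ hℓ => by
      rw [Finset.mem_Icc] at hℓ; exact hIκint ℓ hℓ.1 hℓ.2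
  rw [integral_sub hAvint hsum1, integral_sub hAvint hsum2,
    integral_finset_sum _ (fun ℓ hℓ => by
      rw [Finset.mem_Icc] at hℓ; exact hIcint ℓ hℓ.1 hℓ.2),
    integral_finset_sum _ (fun ℓ hℓ => by
      rw [Finset.mem_Icc] at hℓ; exact hIκint ℓ hℓ.1 hℓ.2)]
  congr 1
  exact Finset.sum_congr rfl key
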